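/- arXiv:1904.06309 — 4 statements merged into one kernel-verified Lean document; each statement's English description precedes it below -/
import Mathlib

section
/- In the elimination algorithm, if for all phases l and arms a the estimates satisfy |û_l(a) − μ(a)| ≤ 2^{-l-1}, then: (1) the best arm (arm 1) is never eliminated, i.e., û_l(1) ≥ max_k û_l(k) − 2^{-l} for all l; and (2) every arm a surviving to phase l+1 satisfies μ(a) ≥ μ(1) − 2^{-l+1}. -/
/-- In the elimination algorithm, if all estimates satisfy `|uh l a - μa a| ≤ 2^(-l-1)`,
then: (1) the best arm `astar` is never eliminated, i.e. for all phases `l ≥ 1` and all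
active arms `k`, `uh l k - 2^(-l) ≤ uh l astar`; and (2) every arm surviving to phase
`l+1` satisfies `μa a ≥ μa astar - 2^(-l+1)`. -/
theorem stmt7 (K : ℕ) (μa : Fin K → ℝ) (astar : Fin K)
    (hbest : ∀ k, μa k ≤ μa astar)
    (uh : ℕ → Fin K → ℝ)
    (hconc : ∀ l ≥ 1, ∀ a : Fin K, |uh l a - μa a| ≤ (2 : ℝ) ^ (-(l : ℝ) - 1))
    (A : ℕ → Finset (Fin K))
    (hinit : ∀ a, a ∈ A 1)
    (helim : ∀ l ≥ 1, ∀ a : Fin K,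
      (a ∈ A (l + 1) ↔ a ∈ A l ∧ ∀ k ∈ A l, uh l k - (2 : ℝ) ^ (-(l : ℝ)) ≤ uh l a)) :
    (∀ l ≥ 1, ∀ k ∈ A l, uh l k - (2 : ℝ) ^ (-(l : ℝ)) ≤ uh l astar) ∧
      (∀ l ≥ 1, ∀ a ∈ A (l + 1), μa astar - (2 : ℝ) ^ (-(l : ℝ) + 1) ≤ μa a) := by
  have h2 : ∀ l : ℕ, (2 : ℝ) ^ (-(l : ℝ)) = 2 * (2 : ℝ) ^ (-(l : ℝ) - 1) := by
    intro l
    rw [show (-(l : ℝ)) = (-(l : ℝ) - 1) + 1 by ring,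
      Real.rpow_add (by norm_num), Real.rpow_one]
    ring
  have part1 : ∀ l ≥ 1, ∀ k : Fin K, uh l k - (2 : ℝ) ^ (-(l : ℝ)) ≤ uh l astar := by
    intro l hl k
    have hk := abs_le.1 (hconc l hl k)
    have hs := abs_le.1 (hconc l hl astar)
    have hb := hbest k
    have := h2 l
    linarith [hk.1, hk.2, hs.1, hs.2]
  have hactive : ∀ l ≥ 1, astar ∈ A l := by
    intro l hl
    induction l with
    | zero => omega
    | succ n ih =>
      rcases Nat.eq_or_lt_of_le hl with h | h
      · rw [← h]; exact hinit astar
      · have hn : n ≥ 1 := by omega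
        exact (helim n hn astar).2 ⟨ih hn, fun k _ => part1 n hn k⟩
  refine ⟨fun l hl k _ => part1 l hl k, fun l hl a ha => ?_⟩
  have h := ((helim l hl a).1 ha).2 astar (hactive l hl)
  have hk := abs_le.1 (hconc l hl a)
  have hs := abs_le.1 (hconc l hl astar)
  have e1 := h2 l
  have e2 : (2 : ℝ) ^ (-(l : ℝ) + 1) = 2 * (2 : ℝ) ^ (-(l : ℝ)) := by
    rw [Real.rpow_add (by norm_num), Real.rpow_one]; ring
  linarith [hk.1, hk.2, hs.1, hs.2]
end

section
/- In the elimination algorithm, under the event that |û_l(a) − μ(a)| ≤ 2^{-l-1} for all phases l and active arms a, any arm i with gap Δ_i = μ(1) − μ(i) > 0 is eliminated by the end of phase l_i = ⌈log_2(1/Δ_i)⌉ + 1; that is, û_{l_i}(1) ≥ û_{l_i}(i) + 2^{-l_i}. -/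
/-- Under the concentration event, any arm `i` with gap `Δ = μa astar - μa i > 0` is
eliminated by the end of phase `lᵢ = ⌈log₂ (1/Δ)⌉ + 1`:
`uh lᵢ astar ≥ uh lᵢ i + 2^(-lᵢ)`. -/
theorem stmt8 (K : ℕ) (μa : Fin K → ℝ) (astar i : Fin K)
    (hbest : ∀ k, μa k ≤ μa astar)
    (Δ : ℝ) (hΔdef : Δ = μa astar - μa i) (hΔ : 0 < Δ)
    (li : ℤ) (hli : li = ⌈Real.logb 2 (1 / Δ)⌉ + 1)
    (uh : Fin K → ℝ)
    (hconc_star : |uh astar - μa astar| ≤ (2 : ℝ) ^ (-li - 1))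
    (hconc_i : |uh i - μa i| ≤ (2 : ℝ) ^ (-li - 1)) :
    uh i + (2 : ℝ) ^ (-li) ≤ uh astar := by
  have h2 : (1:ℝ) < 2 := one_lt_two
  -- 2^(li-1) ≥ 1/Δ
  have hle : Real.logb 2 (1/Δ) ≤ ((li - 1 : ℤ) : ℝ) := by
    have := Int.le_ceil (Real.logb 2 (1/Δ))
    push_cast [hli]
    linarith
  have hpow : (1/Δ : ℝ) ≤ (2:ℝ) ^ (li - 1) := by
    have h1 : (1/Δ : ℝ) = (2:ℝ) ^ (Real.logb 2 (1/Δ)) :=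
      (Real.rpow_logb (by norm_num) (by norm_num) (by positivity)).symm
    have h2' : (2:ℝ) ^ (Real.logb 2 (1/Δ)) ≤ (2:ℝ) ^ (((li - 1 : ℤ) : ℝ)) :=
      Real.rpow_le_rpow_of_exponent_le (by norm_num) hle
    rw [Real.rpow_intCast] at h2'
    linarith [h1 ▸ h2']
  -- hence 2^(-li) ≤ Δ/2
  have hkey : (2:ℝ) ^ (-li) ≤ Δ / 2 := by
    have hpos : (0:ℝ) < (2:ℝ) ^ (li - 1) := by positivity
    have hΔge : (2:ℝ) ^ (-(li-1)) ≤ Δ := by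
      rw [zpow_neg, inv_le_comm₀ hpos hΔ, ← one_div]
      exact hpow
    have heq : (2:ℝ) ^ (-li) = (2:ℝ) ^ (-(li-1)) / 2 := by
      rw [eq_div_iff (by norm_num : (2:ℝ) ≠ 0), ← zpow_add_one₀ (by norm_num : (2:ℝ) ≠ 0)]
      ring_nf
    rw [heq]
    linarith
  have h1 := abs_le.mp hconc_star
  have h2'' := abs_le.mp hconc_i
  have heq2 : (2:ℝ) ^ (-li-1) = (2:ℝ) ^ (-li) / 2 := by
    rw [zpow_sub₀ (by norm_num : (2:ℝ) ≠ 0)]; norm_num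
  rw [heq2] at h1 h2''
  have := hbest i
  linarith [h1.1, h1.2, h2''.1, h2''.2]
end

section
/- For any positive definite V ∈ R^{d×d} and any vector x ∈ R^d, if Ṽ ⪰ V̄ ≻ 0 are positive definite matrices with det(Ṽ)/det(V̄) ≤ 2 and V̄ ⪯ Ṽ, then x^T V̄^{-1} x ≤ (det(Ṽ)/det(V̄))·x^T Ṽ^{-1} x ≤ 2·x^T Ṽ^{-1} x. -/
open Matrix

lemma hvv {n : Type*} [Fintype n] [DecidableEq n] {A : Matrix n n ℝ} (hA : A.IsHermitian) (i : n) :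
    star (⇑(hA.eigenvectorBasis i)) ⬝ᵥ ⇑(hA.eigenvectorBasis i) = 1 := by
  have h := hA.eigenvectorBasis.orthonormal.1 i
  have h2 : (inner ℝ (hA.eigenvectorBasis i) (hA.eigenvectorBasis i) : ℝ) = 1 := by
    rw [real_inner_self_eq_norm_mul_norm, h]; norm_num
  rw [EuclideanSpace.inner_eq_star_dotProduct] at h2
  simpa using h2

lemma key {n : Type*} [Fintype n] [DecidableEq n]
    {M : Matrix n n ℝ} (hM : M.PosDef) (h1 : ((1 : Matrix n n ℝ) - M).PosSemidef) :
    ((M.det⁻¹ • (1 : Matrix n n ℝ)) - M⁻¹).PosSemidef := by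
  have hH := hM.1
  set μ : n → ℝ := hH.eigenvalues with hμdef
  have hpos : ∀ i, 0 < μ i := hM.eigenvalues_pos
  have hle1 : ∀ i, μ i ≤ 1 := by
    intro i
    have h0 := h1.dotProduct_mulVec_nonneg (⇑(hH.eigenvectorBasis i))
    simp only [star_trivial] at h0
    have heq : hH.eigenvalues i = star (⇑(hH.eigenvectorBasis i)) ⬝ᵥ (M *ᵥ ⇑(hH.eigenvectorBasis i)) := by
      simpa using hH.eigenvalues_eq i
    have hv1 : (⇑(hH.eigenvectorBasis i)) ⬝ᵥ ⇑(hH.eigenvectorBasis i) = 1 := by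
      simpa [star_trivial] using hvv hH i
    rw [Matrix.sub_mulVec, one_mulVec, dotProduct_sub, hv1] at h0
    simp only [star_trivial] at heq
    rw [← heq] at h0
    linarith
  have hdet : M.det = ∏ i, μ i := by simpa using hH.det_eq_prod_eigenvalues
  set U : Matrix n n ℝ := (hH.eigenvectorUnitary : Matrix n n ℝ) with hUdef
  have hU1 : U * star U = 1 := Matrix.mem_unitaryGroup_iff.mp hH.eigenvectorUnitary.2
  have hU2 : star U * U = 1 := Matrix.mem_unitaryGroup_iff'.mp hH.eigenvectorUnitary.2
  have hspec : M = U * diagonal μ * star U := by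
    have := hH.spectral_theorem
    simpa [RCLike.ofReal_real_eq_id] using this
  set E : Matrix n n ℝ := diagonal (fun i => (μ i)⁻¹) with hEdef
  have hMinv : M⁻¹ = U * E * star U := by
    apply Matrix.inv_eq_left_inv
    rw [hspec]
    calc U * E * star U * (U * diagonal μ * star U)
        = U * (E * (star U * U) * diagonal μ) * star U := by noncomm_ring
      _ = U * (E * diagonal μ) * star U := by rw [hU2]; noncomm_ring
      _ = 1 := by
          rw [hEdef, diagonal_mul_diagonal]
          have hone : (fun i => (μ i)⁻¹ * μ i) = fun _ => (1:ℝ) :=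
            funext fun i => inv_mul_cancel₀ (hpos i).ne'
          rw [hone, diagonal_one, mul_one, hU1]
  set c : ℝ := M.det⁻¹ with hcdef
  have hc : c = ∏ i, (μ i)⁻¹ := by rw [hcdef, hdet, ← Finset.prod_inv_distrib]
  have hentry : ∀ i, 0 ≤ c - (μ i)⁻¹ := by
    intro i
    have hkey : (μ i)⁻¹ ≤ ∏ j, (μ j)⁻¹ := by
      have hp := Finset.prod_le_prod (s := Finset.univ)
        (f := fun j => if j = i then (μ i)⁻¹ else 1) (g := fun j => (μ j)⁻¹)
        (fun j _ => by
          by_cases h : j = i <;> simp [h, (hpos i).le, inv_nonneg])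
        (fun j _ => by
          by_cases h : j = i
          · simp [h]
          · simp [h, (one_le_inv₀ (hpos j)).mpr (hle1 j)])
      simpa using hp
    rw [hc]; linarith
  have hdiagpsd : (diagonal (fun i => c - (μ i)⁻¹)).PosSemidef :=
    Matrix.PosSemidef.diagonal hentry
  have hconj := hdiagpsd.mul_mul_conjTranspose_same U
  have hrw : U * diagonal (fun i => c - (μ i)⁻¹) * Uᴴ = c • (1 : Matrix n n ℝ) - M⁻¹ := by
    have hd : diagonal (fun i => c - (μ i)⁻¹) = c • (1 : Matrix n n ℝ) - E := by
      ext i j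
      by_cases h : i = j <;> simp [hEdef, h, Matrix.one_apply]
    rw [hd, hMinv, ← Matrix.star_eq_conjTranspose]
    rw [Matrix.mul_sub, Matrix.sub_mul, Matrix.mul_smul, Matrix.smul_mul, mul_one, hU1]
  rwa [hrw] at hconj

lemma posDef_conj {n : Type*} [Fintype n] [DecidableEq n]
    {A B : Matrix n n ℝ} (hA : A.PosDef) (hB : IsUnit B) :
    (Bᴴ * A * B).PosDef := by
  refine PosDef.of_dotProduct_mulVec_pos (isHermitian_conjTranspose_mul_mul B hA.1) fun x hx => ?_
  have hBx : B *ᵥ x ≠ 0 := fun h => hx <| Matrix.mulVec_injective_iff_isUnit.mpr hB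
    (by simpa [Matrix.mulVec_zero] using h)
  simpa only [star_mulVec, dotProduct_mulVec, vecMul_vecMul] using hA.dotProduct_mulVec_pos hBx

/-- Determinant ratio controls norm ratio: for positive definite matrices
`V̄ ⪯ Ṽ` with `det Ṽ / det V̄ ≤ 2`, and any `x`,
`xᵀ V̄⁻¹ x ≤ (det Ṽ / det V̄) * xᵀ Ṽ⁻¹ x ≤ 2 * xᵀ Ṽ⁻¹ x`. -/
theorem stmt18 (d : ℕ) (Vb Vt : Matrix (Fin d) (Fin d) ℝ)
    (hVb : Vb.PosDef) (hVt : Vt.PosDef) (hle : (Vt - Vb).PosSemidef)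
    (hdet : Vt.det / Vb.det ≤ 2) (x : Fin d → ℝ) :
    x ⬝ᵥ (Vb⁻¹ *ᵥ x) ≤ (Vt.det / Vb.det) * (x ⬝ᵥ (Vt⁻¹ *ᵥ x)) ∧
      (Vt.det / Vb.det) * (x ⬝ᵥ (Vt⁻¹ *ᵥ x)) ≤ 2 * (x ⬝ᵥ (Vt⁻¹ *ᵥ x)) := by
  have hq0 : 0 ≤ x ⬝ᵥ (Vt⁻¹ *ᵥ x) := by
    simpa [star_trivial] using hVt.inv.posSemidef.dotProduct_mulVec_nonneg x
  constructor
  · -- main inequality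
    have hSex : ∃ S : Matrix (Fin d) (Fin d) ℝ, S.PosSemidef ∧ S * S = Vt := by
      open scoped MatrixOrder in
      exact ⟨CFC.sqrt Vt, (CFC.sqrt_nonneg Vt).posSemidef,
        CFC.sqrt_mul_sqrt_self Vt hVt.posSemidef.nonneg⟩
    obtain ⟨S, hSpsd, hSS⟩ := hSex
    have hSH : S.IsHermitian := hSpsd.1
    have hSdetsq : S.det * S.det = Vt.det := by rw [← Matrix.det_mul, hSS]
    have hSdetne : S.det ≠ 0 := fun h => by
      rw [h, mul_zero] at hSdetsq; exact hVt.det_pos.ne' hSdetsq.symm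
    have hSdu : IsUnit S.det := isUnit_iff_ne_zero.mpr hSdetne
    set T : Matrix (Fin d) (Fin d) ℝ := S⁻¹ with hTdef
    have hTH : T.IsHermitian := by
      rw [hTdef, Matrix.IsHermitian, Matrix.conjTranspose_nonsing_inv, hSH.eq]
    have hTS : T * S = 1 := Matrix.nonsing_inv_mul S hSdu
    have hST : S * T = 1 := Matrix.mul_nonsing_inv S hSdu
    have hTdu : IsUnit T.det := Matrix.isUnit_nonsing_inv_det S hSdu
    have hTu : IsUnit T := (Matrix.isUnit_iff_isUnit_det T).mpr hTdu
    set M : Matrix (Fin d) (Fin d) ℝ := T * Vb * T with hMdef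
    have hM : M.PosDef := by
      have h := posDef_conj hVb hTu
      rwa [hTH.eq] at h
    have hTVtT : T * Vt * T = 1 := by
      rw [← hSS, ← Matrix.mul_assoc, hTS, Matrix.one_mul, hST]
    have h1 : ((1 : Matrix (Fin d) (Fin d) ℝ) - M).PosSemidef := by
      have hsub : (1 : Matrix (Fin d) (Fin d) ℝ) - M = T * (Vt - Vb) * T := by
        rw [hMdef, Matrix.mul_sub, Matrix.sub_mul, hTVtT]
      have h := hle.conjTranspose_mul_mul_same (B := T)
      rw [hTH.eq] at h
      rwa [hsub]
    have hpsd := key hM h1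
    -- identify M⁻¹ and det
    have hMinv : M⁻¹ = S * Vb⁻¹ * S := by
      apply Matrix.inv_eq_left_inv
      rw [hMdef]
      calc S * Vb⁻¹ * S * (T * Vb * T)
          = S * (Vb⁻¹ * (S * T) * Vb) * T := by noncomm_ring
        _ = S * (Vb⁻¹ * Vb) * T := by rw [hST, Matrix.mul_one]
        _ = 1 := by rw [Matrix.nonsing_inv_mul Vb hVb.det_pos.ne'.isUnit, Matrix.mul_one, hST]
    have hTdet : T.det = S.det⁻¹ := by
      rw [hTdef, Matrix.det_nonsing_inv, Ring.inverse_eq_inv]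
    have hMdet : M.det⁻¹ = Vt.det / Vb.det := by
      rw [hMdef, Matrix.det_mul, Matrix.det_mul, hTdet]
      field_simp
      rw [← hSdetsq, pow_two]
    -- quadratic form computation
    set y : Fin d → ℝ := T *ᵥ x with hydef
    have hq := hpsd.dotProduct_mulVec_nonneg y
    simp only [star_trivial] at hq
    rw [Matrix.sub_mulVec, Matrix.smul_mulVec, Matrix.one_mulVec, dotProduct_sub,
      dotProduct_smul] at hq
    have hTt : Tᵀ = T := by
      rw [← Matrix.conjTranspose_eq_transpose_of_trivial, hTH.eq]
    have dshift : ∀ (u w : Fin d → ℝ), (T *ᵥ u) ⬝ᵥ w = u ⬝ᵥ (T *ᵥ w) := by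
      intro u w
      rw [Matrix.dotProduct_mulVec, ← Matrix.mulVec_transpose, hTt]
    have hyy : y ⬝ᵥ y = x ⬝ᵥ (Vt⁻¹ *ᵥ x) := by
      rw [hydef, dshift, Matrix.mulVec_mulVec]
      congr 2
      rw [hTdef, ← Matrix.mul_inv_rev, hSS]
    have hyMy : y ⬝ᵥ (M⁻¹ *ᵥ y) = x ⬝ᵥ (Vb⁻¹ *ᵥ x) := by
      rw [hydef, Matrix.mulVec_mulVec, dshift, Matrix.mulVec_mulVec]
      have hTMT : T * (M⁻¹ * T) = Vb⁻¹ :=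
        calc T * (M⁻¹ * T) = T * (S * Vb⁻¹ * S * T) := by rw [hMinv]
        _ = (T * S) * Vb⁻¹ * (S * T) := by noncomm_ring
        _ = Vb⁻¹ := by rw [hTS, hST, Matrix.one_mul, Matrix.mul_one]
      rw [hTMT]
    rw [hyy, hyMy, hMdet, smul_eq_mul] at hq
    linarith
  · exact mul_le_mul_of_nonneg_right hdet hq0
end

section
/- Epoch-count bound: if P epochs partition T time steps such that each epoch j either has length at least α or satisfies log(det V_j / det V_{j-1}) > D/α, and Σ_j log(det V_j / det V_{j-1}) ≤ R, then P ≤ ⌈T/α⌉ + ⌈R·α/D⌉; choosing α = √(D·T/R) gives P = O(√(T·R/D)). -/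
/-- Epoch-count bound in DisLinUCB: if `P` epochs with lengths `n j` summing to at
most `T` and nonnegative log-det increments `g j` summing to at most `R` satisfy,
for every `j`, either `n j ≥ α` or `g j > D / α`, then
`P ≤ ⌈T/α⌉ + ⌈R*α/D⌉`; choosing `α = √(D*T/R)` gives `P ≤ 2*√(T*R/D) + 2`. -/
theorem stmt19 (P T : ℕ) (D R α : ℝ) (hD : 0 < D) (hR : 0 < R) (hα : 0 < α)
    (g : Fin P → ℝ) (hg : ∀ j, 0 ≤ g j) (hgsum : ∑ j, g j ≤ R)
    (n : Fin P → ℕ) (hnsum : ∑ j, n j ≤ T)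
    (halt : ∀ j, α ≤ n j ∨ D / α < g j) :
    (P : ℝ) ≤ (⌈(T : ℝ) / α⌉₊ : ℝ) + (⌈R * α / D⌉₊ : ℝ) ∧
      (α = Real.sqrt (D * T / R) → (P : ℝ) ≤ 2 * Real.sqrt (T * R / D) + 2) := by
  classical
  set A : Finset (Fin P) := Finset.univ.filter (fun j => α ≤ (n j : ℝ)) with hA
  set B : Finset (Fin P) := Finset.univ.filter (fun j => (n j : ℝ) < α) with hB
  have hcard : A.card + B.card = P := by
    simpa [not_le] using Finset.card_filter_add_card_filter_not
      (s := (Finset.univ : Finset (Fin P))) (p := fun j => α ≤ (n j : ℝ))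
  -- bound on |A|
  have hAbound : (A.card : ℝ) ≤ (T : ℝ) / α := by
    rw [le_div_iff₀ hα]
    have h1 : (A.card : ℝ) * α ≤ ∑ j ∈ A, (n j : ℝ) := by
      have := Finset.card_nsmul_le_sum A (fun j => (n j : ℝ)) α
        (fun j hj => (Finset.mem_filter.mp hj).2)
      simpa [nsmul_eq_mul] using this
    have h2 : ∑ j ∈ A, (n j : ℝ) ≤ (T : ℝ) := by
      calc ∑ j ∈ A, (n j : ℝ) ≤ ∑ j, (n j : ℝ) :=
            Finset.sum_le_sum_of_subset_of_nonneg (Finset.subset_univ A)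
              (fun j _ _ => by positivity)
        _ ≤ (T : ℝ) := by exact_mod_cast hnsum
    linarith
  -- bound on |B|
  have hBbound : (B.card : ℝ) ≤ R * α / D := by
    have hDα : 0 < D / α := by positivity
    have h1 : (B.card : ℝ) * (D / α) ≤ ∑ j ∈ B, g j := by
      have := Finset.card_nsmul_le_sum B g (D / α) (fun j hj => by
        have h := (Finset.mem_filter.mp hj).2
        have := (halt j).resolve_left (not_le.mpr h)
        linarith)
      simpa [nsmul_eq_mul] using this
    have h2 : ∑ j ∈ B, g j ≤ R := by
      calc ∑ j ∈ B, g j ≤ ∑ j, g j :=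
            Finset.sum_le_sum_of_subset_of_nonneg (Finset.subset_univ B)
              (fun j _ _ => hg j)
        _ ≤ R := hgsum
    have h3 : (B.card : ℝ) * (D / α) ≤ R := le_trans h1 h2
    rw [le_div_iff₀ hD]
    calc (B.card : ℝ) * D = ((B.card : ℝ) * (D / α)) * α := by field_simp
      _ ≤ R * α := by nlinarith
  have hmain : (P : ℝ) ≤ (T : ℝ) / α + R * α / D := by
    have : (P : ℝ) = (A.card : ℝ) + (B.card : ℝ) := by exact_mod_cast hcard.symm
    linarith
  constructor
  · have h1 : (T : ℝ) / α ≤ (⌈(T : ℝ) / α⌉₊ : ℝ) := Nat.le_ceil _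
    have h2 : R * α / D ≤ (⌈R * α / D⌉₊ : ℝ) := Nat.le_ceil _
    linarith
  · intro hαeq
    have hT : 0 < (T : ℝ) := by
      by_contra h
      push_neg at h
      have hT0 : (T : ℝ) = 0 := le_antisymm h (by positivity)
      rw [hαeq, hT0] at hα
      simp at hα
    have hα2 : α ^ 2 = D * T / R := by
      rw [hαeq, Real.sq_sqrt (by positivity)]
    have e1 : (T : ℝ) / α = Real.sqrt (T * R / D) := by
      have : ((T : ℝ) / α) ^ 2 = (T : ℝ) * R / D := by
        rw [div_pow, hα2]; field_simp
      rw [← this, Real.sqrt_sq (by positivity)]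
    have e2 : R * α / D = Real.sqrt (T * R / D) := by
      have : (R * α / D) ^ 2 = (T : ℝ) * R / D := by
        rw [div_pow, mul_pow, hα2]; field_simp
      rw [← this, Real.sqrt_sq (by positivity)]
    have c1 : (⌈(T : ℝ) / α⌉₊ : ℝ) < (T : ℝ) / α + 1 :=
      Nat.ceil_lt_add_one (by positivity)
    have c2 : (⌈R * α / D⌉₊ : ℝ) < R * α / D + 1 :=
      Nat.ceil_lt_add_one (by positivity)
    have h1 : (T : ℝ) / α ≤ (⌈(T : ℝ) / α⌉₊ : ℝ) := Nat.le_ceil _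
    have h2 : R * α / D ≤ (⌈R * α / D⌉₊ : ℝ) := Nat.le_ceil _
    nlinarith [hmain, c1, c2, e1, e2]
end
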